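/- Let g: D_{r₀} → ℝ with g(0,0) = 0, g ∈ C^{1,α} on each annulus D̄_r \ D_{r/2} (0 < r ≤ r₀) with C^{1,α}-norms of the rescalings g_r(x,y) := g(rx,ry)/r uniformly bounded, and suppose g_r → G in C(D̄₁ \ D_{1/2}) as r → 0, where G(x,y) = √(x²+y²)/√2. Then g is Lipschitz on D_{r₀}, g_r → G in C^{1,β}(D̄₁ \ D_{1/2}) for every β < α, and ∇g(x,y) − ∇G(x,y) → 0 as (x,y) → (0,0); in particular g − G is C¹ at the origin with vanishing gradient difference. -/

import Mathlib

open Metric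

noncomputable section

abbrev E2 := EuclideanSpace ℝ (Fin 2)

/-- The limit cone profile `G(x,y) = √(x²+y²)/√2`. -/
def Gfun (v : E2) : ℝ := Real.sqrt ((v 0) ^ 2 + (v 1) ^ 2) / Real.sqrt 2

/-- The closed annulus `D̄₁ \ D_{1/2}`. -/
def Ann : Set E2 := closedBall (0 : E2) 1 \ ball (0 : E2) (1/2)

/-- The rescaling `g_r(x) = g(rx)/r`. -/
def resc (g : E2 → ℝ) (r : ℝ) : E2 → ℝ := fun x => g (r • x) / r

lemma mem_Ann_iff {x : E2} : x ∈ Ann ↔ 1/2 ≤ ‖x‖ ∧ ‖x‖ ≤ 1 := by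
  simp [Ann, mem_closedBall, mem_ball, dist_zero_right, not_lt, and_comm]

lemma Gfun_eq (v : E2) : Gfun v = Real.sqrt (‖v‖ ^ 2) / Real.sqrt 2 := by
  have : ‖v‖ ^ 2 = (v 0) ^ 2 + (v 1) ^ 2 := by
    rw [EuclideanSpace.norm_eq, Real.sq_sqrt (by positivity)]
    simp [Fin.sum_univ_two, sq_abs]
  rw [Gfun, this]

/-- derivative of `Gfun` at `x ≠ 0`. -/
def DG (x : E2) : E2 →L[ℝ] ℝ := (Real.sqrt 2 * ‖x‖)⁻¹ • (innerSL ℝ x)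

lemma hasFDerivAt_Gfun {x : E2} (hx : x ≠ 0) : HasFDerivAt Gfun (DG x) x := by
  have hnx : (0:ℝ) < ‖x‖ := norm_pos_iff.2 hx
  have h1 : HasFDerivAt (fun v : E2 => ‖v‖ ^ 2) (2 • (innerSL ℝ x)) x :=
    (hasStrictFDerivAt_norm_sq x).hasFDerivAt
  have h2 := (Real.hasDerivAt_sqrt (by positivity : ‖x‖ ^ 2 ≠ 0)).comp_hasFDerivAt x h1
  have h3 := h2.const_smul (R := ℝ) (Real.sqrt 2)⁻¹
  have : Gfun = fun v : E2 => (Real.sqrt 2)⁻¹ • ((fun t => Real.sqrt t) ∘ fun v : E2 => ‖v‖ ^ 2) v := by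
    funext v
    simp [Gfun_eq, div_eq_inv_mul, Function.comp]
  rw [this]
  refine h3.congr_fderiv ?_
  symm
  rw [Real.sqrt_sq hnx.le]
  ext y
  simp [DG, ContinuousLinearMap.smul_apply]
  field_simp
lemma fderiv_Gfun {x : E2} (hx : x ≠ 0) : fderiv ℝ Gfun x = DG x :=
  (hasFDerivAt_Gfun hx).fderiv

lemma DG_smul {x : E2} (hx : x ≠ 0) {c : ℝ} (hc : 0 < c) : DG (c • x) = DG x := by
  have hnx : (0:ℝ) < ‖x‖ := norm_pos_iff.2 hx
  ext e
  simp [DG, norm_smul, inner_smul_left, abs_of_pos hc, ContinuousLinearMap.smul_apply,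
    innerSL_apply_apply]
  have h2 : Real.sqrt 2 ≠ 0 := by positivity
  field_simp

lemma norm_DG_sub_le {x y : E2} (hx : 1/2 ≤ ‖x‖) (hy : 1/2 ≤ ‖y‖) :
    ‖DG x - DG y‖ ≤ 4 * ‖x - y‖ := by
  have hax : (0:ℝ) < ‖x‖ := lt_of_lt_of_le (by norm_num) hx
  have hay : (0:ℝ) < ‖y‖ := lt_of_lt_of_le (by norm_num) hy
  have key : DG x - DG y = (Real.sqrt 2)⁻¹ • (innerSL ℝ (‖x‖⁻¹ • x - ‖y‖⁻¹ • y)) := by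
    ext e
    simp [DG, inner_sub_left, inner_smul_left, ContinuousLinearMap.smul_apply, innerSL_apply_apply,
      mul_inv]
    ring
  rw [key, norm_smul ((Real.sqrt 2)⁻¹) (innerSL ℝ (‖x‖⁻¹ • x - ‖y‖⁻¹ • y)),
    innerSL_apply_norm]
  have hs2 : (1:ℝ) ≤ Real.sqrt 2 := by
    nlinarith [Real.sq_sqrt (by norm_num : (0:ℝ) ≤ 2), Real.sqrt_nonneg 2]
  have hdec : ‖x‖⁻¹ • x - ‖y‖⁻¹ • y = ‖x‖⁻¹ • (x - y) + (‖x‖⁻¹ - ‖y‖⁻¹) • y := by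
    module
  have hd : |‖x‖ - ‖y‖| ≤ ‖x - y‖ := abs_norm_sub_norm_le x y
  have h5 : |‖x‖⁻¹ - ‖y‖⁻¹| = |‖x‖ - ‖y‖| / (‖x‖ * ‖y‖) := by
    rw [abs_sub_comm ‖x‖ ‖y‖,
      show ‖x‖ * ‖y‖ = |‖x‖ * ‖y‖| from (abs_of_pos (mul_pos hax hay)).symm, ← abs_div]
    congr 1
    field_simp
  have hb : ‖‖x‖⁻¹ • x - ‖y‖⁻¹ • y‖ ≤ ‖x‖⁻¹ • ‖x - y‖ + |‖x‖⁻¹ - ‖y‖⁻¹| * ‖y‖ := by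
    rw [hdec]
    refine (norm_add_le _ _).trans ?_
    rw [norm_smul, norm_smul]
    simp [abs_of_pos (inv_pos.2 hax)]
  have hinv : ‖x‖⁻¹ ≤ 2 := by
    rw [inv_le_comm₀ hax (by norm_num)]
    linarith
  have h6 : |‖x‖⁻¹ - ‖y‖⁻¹| * ‖y‖ ≤ 2 * ‖x - y‖ := by
    rw [h5]
    rw [div_mul_eq_mul_div, div_le_iff₀ (by positivity)]
    calc |‖x‖ - ‖y‖| * ‖y‖ ≤ ‖x - y‖ * ‖y‖ := by
          exact mul_le_mul_of_nonneg_right hd (norm_nonneg y)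
      _ ≤ 2 * ‖x - y‖ * (‖x‖ * ‖y‖) := by
          have hkey := mul_nonneg (mul_nonneg (norm_nonneg (x - y)) (norm_nonneg y))
            (by linarith : (0:ℝ) ≤ 2 * ‖x‖ - 1)
          nlinarith [hkey]
  have habs : |(Real.sqrt 2)⁻¹| ≤ 1 := by
    rw [abs_of_nonneg (by positivity)]
    rw [inv_le_one_iff₀]
    right; linarith
  have hfin : ‖‖x‖⁻¹ • x - ‖y‖⁻¹ • y‖ ≤ 4 * ‖x - y‖ := by
    refine hb.trans ?_
    have : ‖x‖⁻¹ • ‖x - y‖ ≤ 2 * ‖x - y‖ := by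
      rw [smul_eq_mul]
      exact mul_le_mul_of_nonneg_right hinv (norm_nonneg _)
    linarith
  calc |(Real.sqrt 2)⁻¹| * ‖‖x‖⁻¹ • x - ‖y‖⁻¹ • y‖ ≤ 1 * (4 * ‖x - y‖) := by
        exact mul_le_mul habs hfin (norm_nonneg _) zero_le_one
    _ = 4 * ‖x - y‖ := by ring
lemma resc_hasFDerivAt (g : E2 → ℝ) {r : ℝ} (hr : 0 < r) {x : E2}
    (hd : DifferentiableAt ℝ g (r • x)) :
    HasFDerivAt (resc g r) (fderiv ℝ g (r • x)) x := by
  have h1 : HasFDerivAt (fun y : E2 => r • y) (r • ContinuousLinearMap.id ℝ E2) x :=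
    (hasFDerivAt_id x).const_smul r
  have h2 := (hd.hasFDerivAt.comp x h1)
  have h3 := h2.const_smul (R := ℝ) r⁻¹
  have heq : resc g r = fun y => r⁻¹ • ((g ∘ fun y : E2 => r • y) y) := by
    funext y
    simp [resc, div_eq_inv_mul, Function.comp]
  rw [heq]
  refine h3.congr_fderiv ?_
  symm
  ext e
  simp [ContinuousLinearMap.smul_apply]
  field_simp

lemma fderiv_resc (g : E2 → ℝ) {r : ℝ} (hr : 0 < r) {x : E2}
    (hd : DifferentiableAt ℝ g (r • x)) :
    fderiv ℝ (resc g r) x = fderiv ℝ g (r • x) :=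
  (resc_hasFDerivAt g hr hd).fderiv

lemma inner_coords (w e : E2) : (inner ℝ w e : ℝ) = w 0 * e 0 + w 1 * e 1 := by
  rw [PiLp.inner_apply]
  simp [Fin.sum_univ_two, RCLike.inner_apply, mul_comm]

lemma norm_sq_coords (v : E2) : ‖v‖ ^ 2 = (v 0) ^ 2 + (v 1) ^ 2 := by
  rw [EuclideanSpace.norm_eq, Real.sq_sqrt (by positivity)]
  simp [Fin.sum_univ_two, sq_abs]

lemma opnorm_le_two_mul {x : E2} (hx : x ∈ Ann) (ℓ : E2 →L[ℝ] ℝ) (c : ℝ)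
    (H : ∀ w : E2, ‖w‖ = 1 → (inner ℝ x w : ℝ) = ‖x‖ / Real.sqrt 2 → |ℓ w| ≤ c) :
    ‖ℓ‖ ≤ 2 * c := by
  have hxm : 1/2 ≤ ‖x‖ ∧ ‖x‖ ≤ 1 := by
    constructor
    · simpa [Ann, mem_closedBall, mem_ball, dist_zero_right, not_lt] using hx.2
    · simpa [Ann, mem_closedBall, dist_zero_right] using hx.1
  set a := x 0 with ha
  set b := x 1 with hb
  set n := ‖x‖ with hn
  have hn0 : (0:ℝ) < n := lt_of_lt_of_le (by norm_num) hxm.1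
  set s := Real.sqrt 2 with hs
  have hs2 : s ^ 2 = 2 := Real.sq_sqrt (by norm_num)
  have hs0 : (0:ℝ) < s := Real.sqrt_pos.2 (by norm_num)
  set k := (s * n)⁻¹ with hk
  have hk0 : (0:ℝ) < k := by positivity
  have hab : a ^ 2 + b ^ 2 = n ^ 2 := (norm_sq_coords x).symm
  have hk2 : k ^ 2 * (2 * n ^ 2) = 1 := by
    rw [hk]
    field_simp
    linear_combination (-1) * hs2
  set u : E2 := k • (EuclideanSpace.single 0 (a - b) + EuclideanSpace.single 1 (b + a)) with hu
  set v : E2 := k • (EuclideanSpace.single 0 (a + b) + EuclideanSpace.single 1 (b - a)) with hv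
  have hu0 : u 0 = k * (a - b) := by simp [hu]
  have hu1 : u 1 = k * (b + a) := by simp [hu]
  have hv0 : v 0 = k * (a + b) := by simp [hv]
  have hv1 : v 1 = k * (b - a) := by simp [hv]
  have norm_of_sq : ∀ z : E2, ∀ t : ℝ, 0 ≤ t → ‖z‖ ^ 2 = t ^ 2 → ‖z‖ = t := by
    intro z t ht h
    nlinarith [norm_nonneg z]
  have hun : ‖u‖ = 1 := by
    apply norm_of_sq u 1 zero_le_one
    rw [norm_sq_coords, hu0, hu1]
    linear_combination hk2 + 2 * k^2 * hab
  have hvn : ‖v‖ = 1 := by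
    apply norm_of_sq v 1 zero_le_one
    rw [norm_sq_coords, hv0, hv1]
    linear_combination hk2 + 2 * k^2 * hab
  have hxu : (inner ℝ x u : ℝ) = n / s := by
    rw [inner_coords, hu0, hu1, ← ha, ← hb]
    rw [hk]
    field_simp
    linear_combination hab
  have hxv : (inner ℝ x v : ℝ) = n / s := by
    rw [inner_coords, hv0, hv1, ← ha, ← hb]
    rw [hk]
    field_simp
    linear_combination hab
  have hcu := H u hun hxu
  have hcv := H v hvn hxv
  have hc0 : 0 ≤ c := le_trans (abs_nonneg _) hcu
  have key : ∀ e : E2, e = (inner ℝ u e : ℝ) • u + (inner ℝ v e : ℝ) • v := by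
    intro e
    have expand : ∀ i : Fin 2, ((inner ℝ u e : ℝ) • u + (inner ℝ v e : ℝ) • v) i
        = (inner ℝ u e : ℝ) * u i + (inner ℝ v e : ℝ) * v i := by
      intro i
      simp [PiLp.add_apply, PiLp.smul_apply, smul_eq_mul]
    have c0 : ((inner ℝ u e : ℝ) • u + (inner ℝ v e : ℝ) • v) 0 = e 0 := by
      rw [expand 0, inner_coords, inner_coords, hu0, hu1, hv0, hv1]
      linear_combination (e 0) * hk2 + 2 * k^2 * (e 0) * hab
    have c1 : ((inner ℝ u e : ℝ) • u + (inner ℝ v e : ℝ) • v) 1 = e 1 := by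
      rw [expand 1, inner_coords, inner_coords, hu0, hu1, hv0, hv1]
      linear_combination (e 1) * hk2 + 2 * k^2 * (e 1) * hab
    ext i
    fin_cases i
    · exact c0.symm
    · exact c1.symm
  apply ℓ.opNorm_le_bound (by linarith)
  intro e
  have := key e
  calc ‖ℓ e‖ = ‖(inner ℝ u e : ℝ) * ℓ u + (inner ℝ v e : ℝ) * ℓ v‖ := by
        conv_lhs => rw [this]
        rw [map_add, map_smul, map_smul]
        simp [smul_eq_mul]
    _ ≤ |(inner ℝ u e : ℝ)| * |ℓ u| + |(inner ℝ v e : ℝ)| * |ℓ v| := by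
        rw [Real.norm_eq_abs]
        refine (abs_add_le _ _).trans ?_
        rw [abs_mul, abs_mul]
    _ ≤ ‖u‖ * ‖e‖ * c + ‖v‖ * ‖e‖ * c := by
        gcongr
        · exact abs_real_inner_le_norm u e
        · exact abs_real_inner_le_norm v e
    _ = 2 * c * ‖e‖ := by rw [hun, hvn]; ring
lemma mem_Ann_iff' {x : E2} : x ∈ Ann ↔ 1/2 ≤ ‖x‖ ∧ ‖x‖ ≤ 1 := by
  constructor
  · intro hx
    exact ⟨by simpa [Ann, mem_closedBall, mem_ball, dist_zero_right, not_lt] using hx.2,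
      by simpa [Ann, mem_closedBall, dist_zero_right] using hx.1⟩
  · intro ⟨h1, h2⟩
    refine ⟨by simpa [Ann, mem_closedBall, dist_zero_right] using h2,
      by simp only [Ann, Set.mem_diff, mem_ball, dist_zero_right, not_lt]; linarith⟩

lemma sqrt2_bounds : (1:ℝ) ≤ Real.sqrt 2 ∧ Real.sqrt 2 ≤ 3/2 := by
  have h := Real.sq_sqrt (by norm_num : (0:ℝ) ≤ 2)
  have h0 := Real.sqrt_nonneg 2
  constructor <;> nlinarith

lemma seg_mem_Ann {x w : E2} (hx : x ∈ Ann) (hw : ‖w‖ = 1)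
    (hxw : (inner ℝ x w : ℝ) = ‖x‖ / Real.sqrt 2) {h : ℝ} (hh0 : 0 < h) (hh : h ≤ 1/8) :
    ∃ σ : ℝ, |σ| = 1 ∧ segment ℝ x (x + (σ * h) • w) ⊆ Ann := by
  obtain ⟨hn1, hn2⟩ := mem_Ann_iff'.1 hx
  set n := ‖x‖ with hn
  set I : ℝ := inner ℝ x w with hI
  have hs2 := sqrt2_bounds
  have hIl : 1/3 ≤ I := by
    rw [hxw, le_div_iff₀ (by linarith)]
    nlinarith
  have hIu : I ≤ 1 := by
    rw [hxw, div_le_one (by linarith)]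
    linarith
  have main : ∀ σ : ℝ, |σ| = 1 →
      (∀ t ∈ Set.Icc (0:ℝ) 1, 1/4 ≤ n^2 + 2*(t*(σ*h))*I + (t*(σ*h))^2 ∧
        n^2 + 2*(t*(σ*h))*I + (t*(σ*h))^2 ≤ 1) →
      segment ℝ x (x + (σ * h) • w) ⊆ Ann := by
    intro σ hσ hbnd z hz
    rw [segment_eq_image'] at hz
    obtain ⟨t, ht, rfl⟩ := hz
    have hzeq : (fun θ => x + θ • (x + (σ * h) • w - x)) t = x + (t * (σ * h)) • w := by
      show x + t • (x + (σ * h) • w - x) = x + (t * (σ * h)) • w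
      rw [show x + (σ * h) • w - x = (σ * h) • w by abel, smul_smul]
    rw [hzeq]
    have hzn : ‖x + (t * (σ * h)) • w‖^2 = n^2 + 2*(t*(σ*h))*I + (t*(σ*h))^2 := by
      rw [norm_add_sq_real, real_inner_smul_right, norm_smul, hw, ← hI, ← hn]
      simp only [mul_one, Real.norm_eq_abs]
      rw [mul_pow, sq_abs]
      ring
    obtain ⟨hb1, hb2⟩ := hbnd t ht
    rw [← hzn] at hb1 hb2
    rw [mem_Ann_iff']
    constructor
    · nlinarith [norm_nonneg (x + (t * (σ * h)) • w)]
    · nlinarith [norm_nonneg (x + (t * (σ * h)) • w)]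
  by_cases hcase : n ≤ 3/4
  · refine ⟨1, abs_one, main 1 abs_one ?_⟩
    intro t ⟨ht0, ht1⟩
    have hs0 : 0 ≤ t * (1 * h) := by positivity
    have hs1 : t * (1 * h) ≤ 1/8 := by nlinarith
    constructor <;> nlinarith
  · push_neg at hcase
    have habs : |(-1:ℝ)| = 1 := by norm_num
    refine ⟨-1, habs, main (-1) habs ?_⟩
    intro t ⟨ht0, ht1⟩
    have hs0 : t * (-1 * h) ≤ 0 := by nlinarith
    have hs1 : -(1/8) ≤ t * (-1 * h) := by nlinarith
    constructor <;> nlinarith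
lemma deriv_sup_bound {α : ℝ} (hα : 0 < α) (f : E2 → ℝ) (f' : E2 → E2 →L[ℝ] ℝ)
    {δ M h : ℝ} (hδ : 0 ≤ δ) (hM : 0 ≤ M) (hh0 : 0 < h) (hh : h ≤ 1/8)
    (hdf : ∀ z ∈ Ann, HasFDerivAt f (f' z) z)
    (hfb : ∀ z ∈ Ann, |f z| ≤ δ)
    (hH : ∀ z ∈ Ann, ∀ z' ∈ Ann, ‖f' z - f' z'‖ ≤ M * ‖z - z'‖ ^ α)
    {x : E2} (hx : x ∈ Ann) :
    ‖f' x‖ ≤ 2 * ((2 * δ + M * h ^ α * h) / h) := by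
  apply opnorm_le_two_mul hx
  intro w hw hxw
  obtain ⟨σ, hσ, hseg⟩ := seg_mem_Ann hx hw hxw hh0 hh
  set y := x + (σ * h) • w with hy
  have hyx : y - x = (σ * h) • w := by rw [hy]; abel
  have hnyx : ‖y - x‖ = h := by
    rw [hyx, norm_smul, hw, Real.norm_eq_abs, abs_mul, hσ]
    simp [abs_of_pos hh0]
  have hC : ∀ z ∈ segment ℝ x y, ‖f' z - f' x‖ ≤ M * h ^ α := by
    intro z hz
    have hzx : ‖z - x‖ ≤ h := by
      rw [segment_eq_image'] at hz
      obtain ⟨t, ⟨ht0, ht1⟩, rfl⟩ := hz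
      show ‖x + t • (y - x) - x‖ ≤ h
      rw [show x + t • (y - x) - x = t • (y - x) by abel, norm_smul, Real.norm_eq_abs,
        abs_of_nonneg ht0, hnyx]
      nlinarith
    calc ‖f' z - f' x‖ ≤ M * ‖z - x‖ ^ α := hH z (hseg hz) x hx
      _ ≤ M * h ^ α := by
          apply mul_le_mul_of_nonneg_left _ hM
          exact Real.rpow_le_rpow (norm_nonneg _) hzx hα.le
  have hmvt := (convex_segment x y).norm_image_sub_le_of_norm_hasFDerivWithin_le'
      (f' := fun z => f' z) (φ := f' x) (C := M * h ^ α)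
      (fun z hz => (hdf z (hseg hz)).hasFDerivWithinAt) hC
      (left_mem_segment ℝ x y) (right_mem_segment ℝ x y)
  rw [hnyx, hyx, map_smul] at hmvt
  have hfy := hfb y (hseg (right_mem_segment ℝ x y))
  have hfx := hfb x (hseg (left_mem_segment ℝ x y))
  have habs : h * |f' x w| ≤ 2 * δ + M * h ^ α * h := by
    have h1 : |(σ * h) • f' x w| = h * |f' x w| := by
      rw [smul_eq_mul, abs_mul, abs_mul, hσ]
      simp [abs_of_pos hh0]
    have h2 : ‖f y - f x - (σ * h) • f' x w‖ = |f y - f x - (σ * h) • f' x w| :=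
      Real.norm_eq_abs _
    rw [h2] at hmvt
    have := abs_sub_abs_le_abs_sub ((σ * h) • f' x w) (f y - f x)
    have htr : |(σ * h) • f' x w| ≤ |f y - f x| + M * h ^ α * h := by
      have : |(σ * h) • f' x w - (f y - f x)| ≤ M * h ^ α * h := by
        rw [abs_sub_comm]
        linarith [hmvt]
      have h3 := abs_sub_abs_le_abs_sub ((σ * h) • f' x w) (f y - f x)
      linarith [abs_abs_sub_abs_le_abs_sub ((σ * h) • f' x w) (f y - f x)]
    have h4 : |f y - f x| ≤ 2 * δ := by
      have := abs_sub (f y) (f x)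
      calc |f y - f x| ≤ |f y| + |f x| := abs_sub _ _
        _ ≤ 2 * δ := by linarith
    rw [h1] at htr
    linarith
  rw [le_div_iff₀ hh0]
  calc |f' x w| * h = h * |f' x w| := by ring
    _ ≤ 2 * δ + M * h ^ α * h := habs
lemma DG_holder {α : ℝ} (hα0 : 0 < α) (hα1 : α ≤ 1) {x y : E2} (hx : x ∈ Ann) (hy : y ∈ Ann) :
    ‖DG x - DG y‖ ≤ 8 * ‖x - y‖ ^ α := by
  obtain ⟨hx1, hx2⟩ := mem_Ann_iff'.1 hx
  obtain ⟨hy1, hy2⟩ := mem_Ann_iff'.1 hy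
  by_cases hxy : x = y
  · subst hxy
    simp [Real.zero_rpow hα0.ne']
  · have hd : (0:ℝ) < ‖x - y‖ := by
      rw [norm_pos_iff]
      exact sub_ne_zero_of_ne hxy
    have hd2 : ‖x - y‖ ≤ 2 := by
      calc ‖x - y‖ ≤ ‖x‖ + ‖y‖ := norm_sub_le x y
        _ ≤ 2 := by linarith
    have h4 := norm_DG_sub_le hx1 hy1
    have hsplit : ‖x - y‖ = ‖x - y‖ ^ α * ‖x - y‖ ^ (1 - α) := by
      rw [← Real.rpow_add hd, add_sub_cancel, Real.rpow_one]
    have hexp : ‖x - y‖ ^ (1 - α) ≤ 2 := by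
      calc ‖x - y‖ ^ (1 - α) ≤ (2:ℝ) ^ (1 - α) :=
            Real.rpow_le_rpow hd.le hd2 (by linarith)
        _ ≤ (2:ℝ) ^ (1:ℝ) := Real.rpow_le_rpow_of_exponent_le (by norm_num) (by linarith)
        _ = 2 := Real.rpow_one 2
    calc ‖DG x - DG y‖ ≤ 4 * ‖x - y‖ := h4
      _ = 4 * (‖x - y‖ ^ α * ‖x - y‖ ^ (1 - α)) := by rw [← hsplit]
      _ ≤ 4 * (‖x - y‖ ^ α * 2) := by
          have hrα : (0:ℝ) ≤ ‖x - y‖ ^ α := Real.rpow_nonneg hd.le α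
          nlinarith [Real.rpow_nonneg hd.le (1 - α)]
      _ = 8 * ‖x - y‖ ^ α := by ring

lemma Ann_ne_zero {z : E2} (hz : z ∈ Ann) : z ≠ 0 := by
  obtain ⟨h1, _⟩ := mem_Ann_iff'.1 hz
  intro h
  rw [h, norm_zero] at h1
  norm_num at h1

lemma core (g : E2 → ℝ) (r₀ α : ℝ) (hr₀ : 0 < r₀) (hα : α ∈ Set.Ioo (0 : ℝ) 1)
    (hdiff : ∀ x ∈ ball (0 : E2) r₀ \ {0}, DifferentiableAt ℝ g x)
    (L : ℝ) (hL0 : 0 ≤ L)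
    (hL : ∀ r : ℝ, 0 < r → r ≤ r₀ →
      (∀ x ∈ Ann, |resc g r x| ≤ L ∧ ‖fderiv ℝ (resc g r) x‖ ≤ L) ∧
      (∀ x ∈ Ann, ∀ y ∈ Ann,
        ‖fderiv ℝ (resc g r) x - fderiv ℝ (resc g r) y‖ ≤ L * ‖x - y‖ ^ α))
    (hconv : ∀ ε > 0, ∃ ρ > 0, ∀ r : ℝ, 0 < r → r < ρ →
      ∀ x ∈ Ann, |resc g r x - Gfun x| ≤ ε) :
    ∀ ε > 0, ∃ ρ, 0 < ρ ∧ ρ ≤ r₀ ∧ ∀ r : ℝ, 0 < r → r < ρ → ∀ x ∈ Ann,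
      |resc g r x - Gfun x| ≤ ε ∧ ‖fderiv ℝ (resc g r) x - fderiv ℝ Gfun x‖ ≤ ε := by
  obtain ⟨hα0, hα1⟩ := hα
  intro ε hε
  set M := L + 8 with hMdef
  have hM0 : (0:ℝ) ≤ M := by linarith
  set h : ℝ := min (1/8) ((ε / (4 * (M + 1))) ^ (α⁻¹ : ℝ)) with hhdef
  have hbase : (0:ℝ) < ε / (4 * (M + 1)) := by positivity
  have hh0 : 0 < h := lt_min (by norm_num) (Real.rpow_pos_of_pos hbase _)
  have hh8 : h ≤ 1/8 := min_le_left _ _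
  have hhα : M * h ^ α ≤ ε / 4 := by
    have h1 : h ^ α ≤ ((ε / (4 * (M + 1))) ^ (α⁻¹ : ℝ)) ^ α :=
      Real.rpow_le_rpow hh0.le (min_le_right _ _) hα0.le
    have h2 : ((ε / (4 * (M + 1))) ^ (α⁻¹ : ℝ)) ^ α = ε / (4 * (M + 1)) :=
      Real.rpow_inv_rpow hbase.le hα0.ne'
    rw [h2] at h1
    have : M * h ^ α ≤ M * (ε / (4 * (M + 1))) := by
      exact mul_le_mul_of_nonneg_left h1 hM0
    calc M * h ^ α ≤ M * (ε / (4 * (M + 1))) := this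
      _ ≤ (M + 1) * (ε / (4 * (M + 1))) := by
          apply mul_le_mul_of_nonneg_right (by linarith) hbase.le
      _ = ε / 4 := by field_simp
  set δ : ℝ := min ε (ε * h / 8) with hδdef
  have hδ0 : 0 < δ := lt_min hε (by positivity)
  obtain ⟨ρ₁, hρ₁, hρconv⟩ := hconv δ hδ0
  refine ⟨min ρ₁ r₀, lt_min hρ₁ hr₀, min_le_right _ _, ?_⟩
  intro r hr hrρ x hxA
  have hrρ₁ : r < ρ₁ := lt_of_lt_of_le hrρ (min_le_left _ _)
  have hrr₀ : r < r₀ := lt_of_lt_of_le hrρ (min_le_right _ _)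
  have hsup : ∀ z ∈ Ann, |resc g r z - Gfun z| ≤ δ := hρconv r hr hrρ₁
  -- differentiability data
  have hgz : ∀ z ∈ Ann, DifferentiableAt ℝ g (r • z) := by
    intro z hz
    obtain ⟨hz1, hz2⟩ := mem_Ann_iff'.1 hz
    apply hdiff
    constructor
    · rw [mem_ball, dist_zero_right, norm_smul, Real.norm_eq_abs, abs_of_pos hr]
      nlinarith
    · simp only [Set.mem_singleton_iff]
      intro hcon
      rw [smul_eq_zero] at hcon
      rcases hcon with h' | h'
      · exact hr.ne' h'
      · exact Ann_ne_zero hz h'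
  have hA : ∀ z ∈ Ann, HasFDerivAt (resc g r) (fderiv ℝ (resc g r) z) z := by
    intro z hz
    have := resc_hasFDerivAt g hr (hgz z hz)
    rwa [fderiv_resc g hr (hgz z hz)]
  set f : E2 → ℝ := fun z => resc g r z - Gfun z with hfdef
  set f' : E2 → E2 →L[ℝ] ℝ := fun z => fderiv ℝ (resc g r) z - DG z with hf'def
  have hdf : ∀ z ∈ Ann, HasFDerivAt f (f' z) z := by
    intro z hz
    exact (hA z hz).sub (hasFDerivAt_Gfun (Ann_ne_zero hz))
  have hH : ∀ z ∈ Ann, ∀ z' ∈ Ann, ‖f' z - f' z'‖ ≤ M * ‖z - z'‖ ^ α := by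
    intro z hz z' hz'
    have h1 := (hL r hr hrr₀.le).2 z hz z' hz'
    have h2 := DG_holder hα0 hα1.le hz hz'
    calc ‖f' z - f' z'‖
        = ‖(fderiv ℝ (resc g r) z - fderiv ℝ (resc g r) z') - (DG z - DG z')‖ := by
          congr 1
          simp only [hf'def]
          abel
      _ ≤ ‖fderiv ℝ (resc g r) z - fderiv ℝ (resc g r) z'‖ + ‖DG z - DG z'‖ :=
          norm_sub_le _ _
      _ ≤ L * ‖z - z'‖ ^ α + 8 * ‖z - z'‖ ^ α := by linarith
      _ = M * ‖z - z'‖ ^ α := by rw [hMdef]; ring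
  have hbnd := fun (hxA' : x ∈ Ann) => deriv_sup_bound hα0 f f' hδ0.le hM0 hh0 hh8 hdf hsup hH hxA'
  have hfin : ‖f' x‖ ≤ ε := by
    have hb := hbnd hxA
    have hδh : δ ≤ ε * h / 8 := min_le_right _ _
    have hdd : 2 * ((2 * δ + M * h ^ α * h) / h) ≤ ε := by
      rw [← mul_div_assoc, div_le_iff₀ hh0]
      nlinarith [mul_nonneg (sub_nonneg.2 hhα) hh0.le, hδh, hh0.le]
    exact hb.trans hdd
  refine ⟨le_trans (hsup x hxA) (min_le_left _ _), ?_⟩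
  rw [fderiv_Gfun (Ann_ne_zero hxA)]
  exact hfin

lemma sub_DG_holder {α L : ℝ} (hα0 : 0 < α) (hα1 : α ≤ 1)
    (A : E2 → E2 →L[ℝ] ℝ)
    (hA : ∀ x ∈ Ann, ∀ y ∈ Ann, ‖A x - A y‖ ≤ L * ‖x - y‖ ^ α) :
    ∀ x ∈ Ann, ∀ y ∈ Ann,
      ‖(A x - fderiv ℝ Gfun x) - (A y - fderiv ℝ Gfun y)‖ ≤ (L + 8) * ‖x - y‖ ^ α := by
  intro x hx y hy
  rw [fderiv_Gfun (Ann_ne_zero hx), fderiv_Gfun (Ann_ne_zero hy)]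
  have h1 := hA x hx y hy
  have h2 := DG_holder hα0 hα1 hx hy
  calc ‖(A x - DG x) - (A y - DG y)‖ = ‖(A x - A y) - (DG x - DG y)‖ := by
        congr 1; abel
    _ ≤ ‖A x - A y‖ + ‖DG x - DG y‖ := norm_sub_le _ _
    _ ≤ L * ‖x - y‖ ^ α + 8 * ‖x - y‖ ^ α := by linarith
    _ = (L + 8) * ‖x - y‖ ^ α := by ring

lemma part2 (g : E2 → ℝ) (r₀ α : ℝ) (hr₀ : 0 < r₀) (hα : α ∈ Set.Ioo (0 : ℝ) 1)
    (hdiff : ∀ x ∈ ball (0 : E2) r₀ \ {0}, DifferentiableAt ℝ g x)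
    (L : ℝ) (hL0 : 0 ≤ L)
    (hL : ∀ r : ℝ, 0 < r → r ≤ r₀ →
      (∀ x ∈ Ann, |resc g r x| ≤ L ∧ ‖fderiv ℝ (resc g r) x‖ ≤ L) ∧
      (∀ x ∈ Ann, ∀ y ∈ Ann,
        ‖fderiv ℝ (resc g r) x - fderiv ℝ (resc g r) y‖ ≤ L * ‖x - y‖ ^ α))
    (hconv : ∀ ε > 0, ∃ ρ > 0, ∀ r : ℝ, 0 < r → r < ρ →
      ∀ x ∈ Ann, |resc g r x - Gfun x| ≤ ε) :
    ∀ β : ℝ, 0 < β → β < α → ∀ ε > 0, ∃ ρ > 0, ∀ r : ℝ, 0 < r → r < ρ →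
      (∀ x ∈ Ann, |resc g r x - Gfun x| ≤ ε ∧
        ‖fderiv ℝ (resc g r) x - fderiv ℝ Gfun x‖ ≤ ε) ∧
      (∀ x ∈ Ann, ∀ y ∈ Ann,
        ‖(fderiv ℝ (resc g r) x - fderiv ℝ Gfun x) -
          (fderiv ℝ (resc g r) y - fderiv ℝ Gfun y)‖ ≤ ε * ‖x - y‖ ^ β) := by
  obtain ⟨hα0, hα1⟩ := hα
  intro β hβ0 hβα ε hε
  set M := L + 8 with hMdef
  have hM0 : (0:ℝ) ≤ M := by linarith
  have hαβ : 0 < α - β := by linarith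
  set t : ℝ := min 1 ((ε / (2 * (M + 1))) ^ ((α - β)⁻¹ : ℝ)) with htdef
  have hbase : (0:ℝ) < ε / (2 * (M + 1)) := by positivity
  have ht0 : 0 < t := lt_min one_pos (Real.rpow_pos_of_pos hbase _)
  have htβ : 0 < t ^ β := Real.rpow_pos_of_pos ht0 _
  set ε₀ : ℝ := min ε (ε / 2 * t ^ β) with hε₀def
  have hε₀0 : 0 < ε₀ := lt_min hε (by positivity)
  obtain ⟨ρ, hρ0, hρr₀, hcore⟩ := core g r₀ α hr₀ ⟨hα0, hα1⟩ hdiff L hL0 hL hconv ε₀ hε₀0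
  refine ⟨ρ, hρ0, ?_⟩
  intro r hr hrρ
  have hsup := hcore r hr hrρ
  constructor
  · intro x hx
    obtain ⟨h1, h2⟩ := hsup x hx
    exact ⟨h1.trans (min_le_left _ _), h2.trans (min_le_left _ _)⟩
  · intro x hx y hy
    have hH := sub_DG_holder hα0 hα1.le (fun z => fderiv ℝ (resc g r) z)
      ((hL r hr (le_trans hrρ.le hρr₀)).2) x hx y hy
    by_cases hxy : x = y
    · subst hxy
      simp [Real.zero_rpow hβ0.ne']
    · have hd0 : (0:ℝ) < ‖x - y‖ := by
        rw [norm_pos_iff]; exact sub_ne_zero_of_ne hxy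
      by_cases hcase : ‖x - y‖ ≤ t
      · -- interpolation: use α-Hölder bound
        have hsplit : ‖x - y‖ ^ α = ‖x - y‖ ^ (α - β) * ‖x - y‖ ^ β := by
          rw [← Real.rpow_add hd0, sub_add_cancel]
        have hexp : ‖x - y‖ ^ (α - β) ≤ ε / (2 * (M + 1)) := by
          calc ‖x - y‖ ^ (α - β) ≤ t ^ (α - β) :=
                Real.rpow_le_rpow hd0.le hcase hαβ.le
            _ ≤ ((ε / (2 * (M + 1))) ^ ((α - β)⁻¹ : ℝ)) ^ (α - β) :=
                Real.rpow_le_rpow ht0.le (min_le_right _ _) hαβ.le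
            _ = ε / (2 * (M + 1)) := Real.rpow_inv_rpow hbase.le hαβ.ne'
        have hβnn : (0:ℝ) ≤ ‖x - y‖ ^ β := Real.rpow_nonneg hd0.le β
        calc ‖(fderiv ℝ (resc g r) x - fderiv ℝ Gfun x) -
              (fderiv ℝ (resc g r) y - fderiv ℝ Gfun y)‖
            ≤ (L + 8) * ‖x - y‖ ^ α := hH
          _ = M * (‖x - y‖ ^ (α - β) * ‖x - y‖ ^ β) := by rw [← hsplit, hMdef]
          _ ≤ (M + 1) * ((ε / (2 * (M + 1))) * ‖x - y‖ ^ β) := by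
              have hnn : (0:ℝ) ≤ ‖x - y‖ ^ (α - β) := Real.rpow_nonneg hd0.le _
              nlinarith [mul_le_mul_of_nonneg_right hexp hβnn]
          _ = ε / 2 * ‖x - y‖ ^ β := by field_simp
          _ ≤ ε * ‖x - y‖ ^ β := by nlinarith
      · -- large distance: use sup bound
        push_neg at hcase
        obtain ⟨_, h2x⟩ := hsup x hx
        obtain ⟨_, h2y⟩ := hsup y hy
        have hsmall : ε₀ ≤ ε / 2 * t ^ β := min_le_right _ _
        have htle : t ^ β ≤ ‖x - y‖ ^ β :=
          Real.rpow_le_rpow ht0.le hcase.le hβ0.le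
        calc ‖(fderiv ℝ (resc g r) x - fderiv ℝ Gfun x) -
              (fderiv ℝ (resc g r) y - fderiv ℝ Gfun y)‖
            ≤ ‖fderiv ℝ (resc g r) x - fderiv ℝ Gfun x‖ +
              ‖fderiv ℝ (resc g r) y - fderiv ℝ Gfun y‖ := norm_sub_le _ _
          _ ≤ 2 * ε₀ := by linarith
          _ ≤ ε * t ^ β := by linarith
          _ ≤ ε * ‖x - y‖ ^ β := by nlinarith

lemma unit_mem_Ann {x : E2} (hx : x ≠ 0) : ‖x‖⁻¹ • x ∈ Ann := by
  have h0 : (0:ℝ) < ‖x‖ := norm_pos_iff.2 hx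
  have : ‖‖x‖⁻¹ • x‖ = 1 := by
    rw [norm_smul, Real.norm_eq_abs, abs_of_pos (inv_pos.2 h0), inv_mul_cancel₀ h0.ne']
  rw [mem_Ann_iff', this]
  norm_num

lemma smul_unit {x : E2} (hx : x ≠ 0) : ‖x‖ • (‖x‖⁻¹ • x) = x := by
  have h0 : (0:ℝ) < ‖x‖ := norm_pos_iff.2 hx
  rw [smul_smul, mul_inv_cancel₀ h0.ne', one_smul]

lemma part1 (g : E2 → ℝ) (r₀ α : ℝ) (hr₀ : 0 < r₀)
    (hg0 : g 0 = 0)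
    (hdiff : ∀ x ∈ ball (0 : E2) r₀ \ {0}, DifferentiableAt ℝ g x)
    (L : ℝ) (hL0 : 0 ≤ L)
    (hL : ∀ r : ℝ, 0 < r → r ≤ r₀ →
      (∀ x ∈ Ann, |resc g r x| ≤ L ∧ ‖fderiv ℝ (resc g r) x‖ ≤ L)) :
    LipschitzOnWith L.toNNReal g (ball (0 : E2) r₀) := by
  have hgrad : ∀ x ∈ ball (0 : E2) r₀ \ {0}, ‖fderiv ℝ g x‖ ≤ L := by
    intro x hx
    have hx0 : x ≠ 0 := hx.2
    have hxb : ‖x‖ < r₀ := by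
      have := hx.1
      rwa [mem_ball, dist_zero_right] at this
    have hr0 : (0:ℝ) < ‖x‖ := norm_pos_iff.2 hx0
    have hz := unit_mem_Ann hx0
    have hd : DifferentiableAt ℝ g (‖x‖ • (‖x‖⁻¹ • x)) := by
      rw [smul_unit hx0]; exact hdiff x hx
    have := ((hL ‖x‖ hr0 hxb.le) (‖x‖⁻¹ • x) hz).2
    rwa [fderiv_resc g hr0 hd, smul_unit hx0] at this
  have hval : ∀ x ∈ ball (0 : E2) r₀, |g x| ≤ L * ‖x‖ := by
    intro x hx
    by_cases hx0 : x = 0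
    · simp [hx0, hg0]
    · have hxb : ‖x‖ < r₀ := by rwa [mem_ball, dist_zero_right] at hx
      have hr0 : (0:ℝ) < ‖x‖ := norm_pos_iff.2 hx0
      have hz := unit_mem_Ann hx0
      have := ((hL ‖x‖ hr0 hxb.le) (‖x‖⁻¹ • x) hz).1
      rw [resc, smul_unit hx0, abs_div, abs_of_pos hr0, div_le_iff₀ hr0] at this
      linarith [this]
  rw [lipschitzOnWith_iff_dist_le_mul]
  intro x hx y hy
  rw [dist_eq_norm, dist_eq_norm, Real.coe_toNNReal L hL0]
  by_cases h0 : (0:E2) ∈ segment ℝ x y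
  · rw [segment_eq_image'] at h0
    obtain ⟨t, ⟨ht0, ht1⟩, ht⟩ := h0
    have ht' : x + t • (y - x) = 0 := ht
    have hxe : x = -(t • (y - x)) := eq_neg_of_add_eq_zero_left ht'
    have hye : y = (1 - t) • (y - x) := by
      have hdec : y = (x + t • (y - x)) + (1 - t) • (y - x) := by module
      conv_lhs => rw [hdec, ht', zero_add]
    have hnx : ‖x‖ = t * ‖y - x‖ := by
      nth_rewrite 1 [hxe]
      rw [norm_neg, norm_smul, Real.norm_eq_abs, abs_of_nonneg ht0]
    have hny : ‖y‖ = (1 - t) * ‖y - x‖ := by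
      nth_rewrite 1 [hye]
      rw [norm_smul, Real.norm_eq_abs, abs_of_nonneg (by linarith)]
    have h1 := hval x hx
    have h2 := hval y hy
    calc ‖g x - g y‖ ≤ |g x| + |g y| := by
          rw [Real.norm_eq_abs]; exact abs_sub _ _
      _ ≤ L * ‖x‖ + L * ‖y‖ := by linarith
      _ = L * ‖y - x‖ := by rw [hnx, hny]; ring
      _ = L * ‖x - y‖ := by rw [norm_sub_rev]
  · have hsub : segment ℝ x y ⊆ ball (0 : E2) r₀ \ {0} := by
      intro z hz
      refine ⟨(convex_ball (0:E2) r₀).segment_subset hx hy hz, ?_⟩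
      simp only [Set.mem_singleton_iff]
      intro hzz
      exact h0 (hzz ▸ hz)
    have := (convex_segment x y).norm_image_sub_le_of_norm_hasFDerivWithin_le
      (f := g) (f' := fun z => fderiv ℝ g z) (C := L)
      (fun z hz => ((hdiff z (hsub hz)).hasFDerivAt).hasFDerivWithinAt)
      (fun z hz => hgrad z (hsub hz))
      (right_mem_segment ℝ x y) (left_mem_segment ℝ x y)
    calc ‖g x - g y‖ ≤ L * ‖x - y‖ := this

/-- If `g(0)=0`, the rescalings `g_r` have uniformly bounded `C^{1,α}` norms on the
annulus, and `g_r → G` uniformly on the annulus, then `g` is Lipschitz on `D_{r₀}`,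
`g_r → G` in `C^{1,β}` on the annulus for every `β < α`, and `∇g − ∇G → 0` at the
origin. -/
theorem stmt19 (g : E2 → ℝ) (r₀ α : ℝ) (hr₀ : 0 < r₀) (hα : α ∈ Set.Ioo (0 : ℝ) 1)
    (hg0 : g 0 = 0)
    (hdiff : ∀ x ∈ ball (0 : E2) r₀ \ {0}, DifferentiableAt ℝ g x)
    (hbound : ∃ L : ℝ, ∀ r : ℝ, 0 < r → r ≤ r₀ →
      (∀ x ∈ Ann, |resc g r x| ≤ L ∧ ‖fderiv ℝ (resc g r) x‖ ≤ L) ∧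
      (∀ x ∈ Ann, ∀ y ∈ Ann,
        ‖fderiv ℝ (resc g r) x - fderiv ℝ (resc g r) y‖ ≤ L * ‖x - y‖ ^ α))
    (hconv : ∀ ε > 0, ∃ ρ > 0, ∀ r : ℝ, 0 < r → r < ρ →
      ∀ x ∈ Ann, |resc g r x - Gfun x| ≤ ε) :
    (∃ K : NNReal, LipschitzOnWith K g (ball (0 : E2) r₀)) ∧
    (∀ β : ℝ, 0 < β → β < α → ∀ ε > 0, ∃ ρ > 0, ∀ r : ℝ, 0 < r → r < ρ →
      (∀ x ∈ Ann, |resc g r x - Gfun x| ≤ ε ∧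
        ‖fderiv ℝ (resc g r) x - fderiv ℝ Gfun x‖ ≤ ε) ∧
      (∀ x ∈ Ann, ∀ y ∈ Ann,
        ‖(fderiv ℝ (resc g r) x - fderiv ℝ Gfun x) -
          (fderiv ℝ (resc g r) y - fderiv ℝ Gfun y)‖ ≤ ε * ‖x - y‖ ^ β)) ∧
    (∀ ε > 0, ∃ ρ > 0, ∀ x : E2, x ≠ 0 → ‖x‖ < ρ → ‖x‖ < r₀ →
      ‖fderiv ℝ g x - fderiv ℝ Gfun x‖ ≤ ε) := by
  obtain ⟨L, hL⟩ := hbound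
  have hL0 : 0 ≤ L := by
    have hmem : EuclideanSpace.single (0 : Fin 2) (1:ℝ) ∈ Ann := by
      rw [mem_Ann_iff', EuclideanSpace.norm_single]
      norm_num
    have := ((hL r₀ hr₀ le_rfl).1 _ hmem).1
    exact le_trans (abs_nonneg _) this
  refine ⟨⟨L.toNNReal, part1 g r₀ α hr₀ hg0 hdiff L hL0 (fun r hr hrr₀ => (hL r hr hrr₀).1)⟩,
    part2 g r₀ α hr₀ hα hdiff L hL0 hL hconv, ?_⟩
  intro ε hε
  obtain ⟨hα0, hα1⟩ := hα
  obtain ⟨ρ, hρ0, hp⟩ := part2 g r₀ α hr₀ ⟨hα0, hα1⟩ hdiff L hL0 hL hconv (α/2)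
    (by linarith) (by linarith) ε hε
  refine ⟨ρ, hρ0, ?_⟩
  intro x hx0 hxρ hxr₀
  have hr0 : (0:ℝ) < ‖x‖ := norm_pos_iff.2 hx0
  have hz := unit_mem_Ann hx0
  obtain ⟨hsup, _⟩ := hp ‖x‖ hr0 hxρ
  have hbd := (hsup (‖x‖⁻¹ • x) hz).2
  have hd : DifferentiableAt ℝ g (‖x‖ • (‖x‖⁻¹ • x)) := by
    rw [smul_unit hx0]
    exact hdiff x ⟨by rwa [mem_ball, dist_zero_right], hx0⟩
  have he1 : fderiv ℝ (resc g ‖x‖) (‖x‖⁻¹ • x) = fderiv ℝ g x := by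
    rw [fderiv_resc g hr0 hd, smul_unit hx0]
  have he2 : fderiv ℝ Gfun (‖x‖⁻¹ • x) = fderiv ℝ Gfun x := by
    have hzne : (‖x‖⁻¹ • x : E2) ≠ 0 := Ann_ne_zero hz
    rw [fderiv_Gfun hzne, fderiv_Gfun hx0]
    have := DG_smul hx0 (inv_pos.2 hr0)
    exact this
  rwa [he1, he2] at hbd

end
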